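/- In the setting of the main order-bound theorem, if the sequence satisfies deg A_0 < min{0, deg C} and deg A_n > max{2g-2, 2g-2+deg C}, then |Δ| - |Δ'| = deg C, where Δ = {i : A_i ∈ Γ_{P_i} and A_i - C ∉ Γ_{P_i}} and Δ' = {i : A_i ∉ Γ_{P_i} and A_i - C ∈ Γ_{P_i}}. -/
import Mathlib


noncomputable section

/-- Degree of a divisor, where divisors on the curve are modeled as finitely
supported integer valued functions on the set of rational points. -/
def degr {Point : Type*} (D : Point →₀ ℤ) : ℤ := D.sum fun _ n => n

/-- An abstract model of a smooth projective absolutely irreducible curve over a field,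
recording the data used in the paper: the dimension `l D` of the Riemann-Roch space
`L(D)`, the genus `g`, a canonical divisor `K`, and linear equivalence `lin`,
together with their basic properties (Riemann-Roch, monotonicity, semigroup
properties of nongaps, etc.). -/
structure Curve (Point : Type*) where
  /-- `l D = dim L(D)` -/
  l : (Point →₀ ℤ) → ℕ
  /-- the genus -/
  g : ℕ
  /-- a canonical divisor -/
  K : Point →₀ ℤ
  /-- linear equivalence of divisors -/
  lin : (Point →₀ ℤ) → (Point →₀ ℤ) → Prop
  lin_refl : ∀ A, lin A A
  lin_symm : ∀ {A B}, lin A B → lin B A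
  lin_trans : ∀ {A B C}, lin A B → lin B C → lin A C
  lin_add : ∀ {A B} (E : Point →₀ ℤ), lin A B → lin (A + E) (B + E)
  deg_lin : ∀ {A B}, lin A B → degr A = degr B
  l_lin : ∀ {A B}, lin A B → l A = l B
  l_zero : l 0 = 1
  l_neg : ∀ {D}, degr D < 0 → l D = 0
  l_mono : ∀ (D : Point →₀ ℤ) (P : Point), l D ≤ l (D + Finsupp.single P 1)
  l_step : ∀ (D : Point →₀ ℤ) (P : Point), l (D + Finsupp.single P 1) ≤ l D + 1
  /-- Riemann-Roch -/
  rr : ∀ D : Point →₀ ℤ, (l D : ℤ) - l (K - D) = degr D + 1 - g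
  lin_of_deg_zero : ∀ {D}, l D ≠ 0 → degr D = 0 → lin D 0
  /-- the semigroup property of `Γ_P` -/
  gamma_add : ∀ (P : Point) {A B}, l A ≠ l (A - Finsupp.single P 1) →
      l B ≠ l (B - Finsupp.single P 1) → l (A + B) ≠ l (A + B - Finsupp.single P 1)
  eff_add : ∀ {A B}, l A ≠ 0 → l B ≠ 0 → l (A + B) ≠ 0
  point_nongap : ∀ {P Q : Point}, P ≠ Q →
      l (Finsupp.single P 1) ≠ l (Finsupp.single P 1 - Finsupp.single Q 1)

variable {Point : Type*}

/-- `Γ_P` : divisor (classes) with no base point at `P`, i.e. `L(A) ≠ L(A-P)`. -/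
def GammaP (X : Curve Point) (P : Point) : Set (Point →₀ ℤ) :=
  {A | X.l A ≠ X.l (A - Finsupp.single P 1)}

/-- `Γ_S = ∩_{P ∈ S} Γ_P`, with the convention `Γ_∅ = Γ = {A : L(A) ≠ 0}`. -/
def GammaS (X : Curve Point) (S : Finset Point) : Set (Point →₀ ℤ) :=
  {A | (S = ∅ → X.l A ≠ 0) ∧ ∀ P ∈ S, A ∈ GammaP X P}

/-- `Γ(C; S, S') = {A : A ∈ Γ_S and A - C ∈ Γ_{S'}}`. -/
def GammaSet (X : Curve Point) (C : Point →₀ ℤ) (S S' : Finset Point) :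
    Set (Point →₀ ℤ) :=
  {A | A ∈ GammaS X S ∧ A - C ∈ GammaS X S'}

/-- `γ(C; S, S') = min {deg A : A ∈ Γ(C; S, S')}`. -/
def gammaMin (X : Curve Point) (C : Point →₀ ℤ) (S S' : Finset Point) : ℤ :=
  sInf (degr '' GammaSet X C S S')

/-- `Δ = {i : A_i ∈ Γ_{P_i} and A_i - C ∉ Γ_{P_i}}` for indices `1 ≤ i ≤ n`. -/
def Delta (X : Curve Point) (C : Point →₀ ℤ) (n : ℕ) (A : ℕ → Point →₀ ℤ)
    (P : ℕ → Point) : Set ℕ :=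
  {i | 1 ≤ i ∧ i ≤ n ∧ A i ∈ GammaP X (P i) ∧ A i - C ∉ GammaP X (P i)}

/-- `Δ' = {i : A_i ∉ Γ_{P_i} and A_i - C ∈ Γ_{P_i}}` for indices `1 ≤ i ≤ n`. -/
def Delta' (X : Curve Point) (C : Point →₀ ℤ) (n : ℕ) (A : ℕ → Point →₀ ℤ)
    (P : ℕ → Point) : Set ℕ :=
  {i | 1 ≤ i ∧ i ≤ n ∧ A i ∉ GammaP X (P i) ∧ A i - C ∈ GammaP X (P i)}

lemma degr_add (A B : Point →₀ ℤ) : degr (A + B) = degr A + degr B := by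
  unfold degr
  exact Finsupp.sum_add_index' (fun _ => rfl) (fun _ _ _ => rfl)

lemma degr_sub (A B : Point →₀ ℤ) : degr (A - B) = degr A - degr B := by
  have h := degr_add (A - B) B
  rw [sub_add_cancel] at h
  omega

lemma degr_zero : degr (0 : Point →₀ ℤ) = 0 := Finsupp.sum_zero_index

lemma degr_K (X : Curve Point) : degr X.K = 2 * (X.g : ℤ) - 2 := by
  have h0 := X.rr 0
  have hK := X.rr X.K
  rw [sub_zero, degr_zero, X.l_zero] at h0
  rw [sub_self, X.l_zero] at hK
  omega

lemma l_big (X : Curve Point) {D : Point →₀ ℤ} (h : 2 * (X.g : ℤ) - 2 < degr D) :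
    (X.l D : ℤ) = degr D + 1 - X.g := by
  have hK := degr_K X
  have hneg : degr (X.K - D) < 0 := by rw [degr_sub]; omega
  have := X.rr D
  rw [X.l_neg hneg] at this
  omega

open scoped Classical in
lemma l_add_single (X : Curve Point) (D : Point →₀ ℤ) (P : Point) :
    (X.l (D + Finsupp.single P 1) : ℤ) =
      X.l D + (if (D + Finsupp.single P 1) ∈ GammaP X P then 1 else 0) := by
  classical
  have h1 := X.l_mono D P
  have h2 := X.l_step D P
  have hsub : D + Finsupp.single P 1 - Finsupp.single P 1 = D := add_sub_cancel_right _ _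
  by_cases h : (D + Finsupp.single P 1) ∈ GammaP X P
  · simp only [GammaP, Set.mem_setOf_eq, hsub] at h
    rw [if_pos]
    · omega
    · simpa [GammaP, hsub] using h
  · simp only [GammaP, Set.mem_setOf_eq, hsub, not_not] at h
    rw [if_neg]
    · omega
    · simpa [GammaP, hsub] using h

lemma sum_Icc_telescope (F : ℕ → ℤ) (n : ℕ) :
    ∑ i ∈ Finset.Icc 1 n, (F i - F (i - 1)) = F n - F 0 := by
  induction n with
  | zero => simp
  | succ n ih =>
    rw [Finset.sum_Icc_succ_top (by omega), ih]
    simp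

/-- In the setting of the main order-bound theorem, if the sequence
`A_i = A_{i-1} + P_i` satisfies `deg A_0 < min {0, deg C}` and
`deg A_n > max {2g-2, 2g-2+deg C}`, then `|Δ| - |Δ'| = deg C`, where
`Δ = {i : A_i ∈ Γ_{P_i} and A_i - C ∉ Γ_{P_i}}` and
`Δ' = {i : A_i ∉ Γ_{P_i} and A_i - C ∈ Γ_{P_i}}`. -/
theorem delta_diff_eq_deg (X : Curve Point) (C : Point →₀ ℤ)
    (n : ℕ) (A : ℕ → Point →₀ ℤ) (P : ℕ → Point)
    (hA : ∀ i, 1 ≤ i → i ≤ n → A i = A (i - 1) + Finsupp.single (P i) 1)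
    (h0 : degr (A 0) < min 0 (degr C))
    (hn : degr (A n) > max (2 * (X.g : ℤ) - 2) (2 * (X.g : ℤ) - 2 + degr C)) :
    ((Delta X C n A P).ncard : ℤ) - ((Delta' X C n A P).ncard : ℤ) = degr C := by
  classical
  set F : ℕ → ℤ := fun i => (X.l (A i) : ℤ) - X.l (A i - C) with hF
  -- endpoint values
  have hF0 : F 0 = 0 := by
    have hd0 : degr (A 0) < 0 := lt_of_lt_of_le h0 (min_le_left _ _)
    have hdC : degr (A 0 - C) < 0 := by
      rw [degr_sub]
      have := lt_of_lt_of_le h0 (min_le_right _ _)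
      omega
    simp [hF, X.l_neg hd0, X.l_neg hdC]
  have hFn : F n = degr C := by
    have hd1 : 2 * (X.g : ℤ) - 2 < degr (A n) :=
      lt_of_le_of_lt (le_max_left _ _) hn
    have hd2 : 2 * (X.g : ℤ) - 2 < degr (A n - C) := by
      rw [degr_sub]
      have := lt_of_le_of_lt (le_max_right _ _) hn
      omega
    have e1 := l_big X hd1
    have e2 := l_big X hd2
    rw [degr_sub] at e2
    simp only [hF]
    omega
  -- per-step formula
  have hstep : ∀ i ∈ Finset.Icc 1 n, F i - F (i - 1) =
      (if A i ∈ GammaP X (P i) ∧ A i - C ∉ GammaP X (P i) then (1 : ℤ) else 0) -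
      (if A i ∉ GammaP X (P i) ∧ A i - C ∈ GammaP X (P i) then (1 : ℤ) else 0) := by
    intro i hi
    rw [Finset.mem_Icc] at hi
    have hAi := hA i hi.1 hi.2
    have e1 : (X.l (A i) : ℤ) = X.l (A (i - 1)) +
        (if A i ∈ GammaP X (P i) then 1 else 0) := by
      rw [hAi] at *
      exact l_add_single X _ _
    have hAiC : A i - C = (A (i - 1) - C) + Finsupp.single (P i) 1 := by
      rw [hAi]; abel
    have e2 : (X.l (A i - C) : ℤ) = X.l (A (i - 1) - C) +
        (if A i - C ∈ GammaP X (P i) then 1 else 0) := by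
      rw [hAiC] at *
      exact l_add_single X _ _
    simp only [hF]
    rw [e1, e2]
    by_cases h1 : A i ∈ GammaP X (P i) <;> by_cases h2 : A i - C ∈ GammaP X (P i) <;>
      simp [h1, h2]
  -- sets as finsets
  have hD : Delta X C n A P = ↑((Finset.Icc 1 n).filter
      fun i => A i ∈ GammaP X (P i) ∧ A i - C ∉ GammaP X (P i)) := by
    ext i
    simp [Delta, Finset.mem_Icc, and_assoc]
  have hD' : Delta' X C n A P = ↑((Finset.Icc 1 n).filter
      fun i => A i ∉ GammaP X (P i) ∧ A i - C ∈ GammaP X (P i)) := by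
    ext i
    simp [Delta', Finset.mem_Icc, and_assoc]
  rw [hD, hD', Set.ncard_coe_finset, Set.ncard_coe_finset]
  have htel := sum_Icc_telescope F n
  rw [Finset.sum_congr rfl hstep, Finset.sum_sub_distrib, Finset.sum_boole,
    Finset.sum_boole, hF0, hFn] at htel
  omega
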